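/- Let P be a finite set of points in general position in the plane with |P| = n, let p, q ∈ P be distinct, and let T be a pq-brush in which exactly k+1 edges emanate from p and exactly ℓ+1 edges emanate from q (so k + ℓ = n - 2). If ℓ ≥ 1, then there exists a non-crossing spanning tree T' with |E(T) △ E(T')| = 2 that is either a pq-brush with k+2 edges at p and ℓ edges at q, or (if ℓ = 1) the star S(p). -/

import Mathlib

lemma collinear_det {a b c : ℝ × ℝ} :
    Collinear ℝ ({a, b, c} : Set (ℝ × ℝ)) ↔
      (b.1 - a.1) * (c.2 - a.2) - (b.2 - a.2) * (c.1 - a.1) = 0 := by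
  constructor
  · intro h
    rw [collinear_iff_of_mem (Set.mem_insert a {b, c})] at h
    obtain ⟨v, hv⟩ := h
    obtain ⟨rb, hrb⟩ := hv b (by simp)
    obtain ⟨rc, hrc⟩ := hv c (by simp)
    have hb1 : b = rb • v + a := hrb
    have hc1 : c = rc • v + a := hrc
    rw [hb1, hc1]
    simp [Prod.smul_def, smul_eq_mul]
    ring
  · intro h
    by_cases hab : b = a
    · apply Collinear.subset (s₂ := ({a, c} : Set (ℝ × ℝ)))
      · rw [hab]; intro z hz; simp at hz; rcases hz with h|h|h <;> simp [h]
      · exact collinear_pair ℝ a c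
    · rw [collinear_iff_of_mem (Set.mem_insert a {b, c})]
      refine ⟨b - a, ?_⟩
      intro z hz
      rcases hz with rfl | rfl | rfl
      · exact ⟨0, by simp⟩
      · exact ⟨1, by simp⟩
      · by_cases h1 : b.1 - a.1 ≠ 0
        · refine ⟨(z.1 - a.1) / (b.1 - a.1), ?_⟩
          have key : (z.1 - a.1) / (b.1 - a.1) * (b.2 - a.2) = z.2 - a.2 := by
            rw [div_mul_eq_mul_div, div_eq_iff h1]
            linear_combination -h
          ext
          · simp [Prod.smul_def, smul_eq_mul]; field_simp; ring
          · simp [Prod.smul_def, smul_eq_mul]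
            linarith [key]
        · push_neg at h1
          have h2 : b.2 - a.2 ≠ 0 := by
            intro h2
            exact hab (Prod.ext_iff.mpr (⟨by linarith, by linarith⟩ : b.1 = a.1 ∧ b.2 = a.2))
          refine ⟨(z.2 - a.2) / (b.2 - a.2), ?_⟩
          have key : (z.2 - a.2) / (b.2 - a.2) * (b.1 - a.1) = z.1 - a.1 := by
            rw [div_mul_eq_mul_div, div_eq_iff h2]
            linear_combination h
          ext
          · simp [Prod.smul_def, smul_eq_mul]
            linarith [key]
          · simp [Prod.smul_def, smul_eq_mul]; field_simp; ring

lemma shared_endpoint {a b c : ℝ × ℝ}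
    (h : (openSegment ℝ a b ∩ openSegment ℝ a c).Nonempty) :
    Collinear ℝ ({a, b, c} : Set (ℝ × ℝ)) := by
  obtain ⟨z, hz1, hz2⟩ := h
  rw [openSegment_eq_image] at hz1 hz2
  obtain ⟨s, hs, hzs⟩ := hz1
  obtain ⟨t, ht, hzt⟩ := hz2
  rw [collinear_det]
  have e1 : z.1 - a.1 = s * (b.1 - a.1) := by rw [← hzs]; simp; ring
  have e2 : z.2 - a.2 = s * (b.2 - a.2) := by rw [← hzs]; simp; ring
  have e3 : z.1 - a.1 = t * (c.1 - a.1) := by rw [← hzt]; simp; ring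
  have e4 : z.2 - a.2 = t * (c.2 - a.2) := by rw [← hzt]; simp; ring
  have hs0 : s ≠ 0 := ne_of_gt hs.1
  have ht0 : t ≠ 0 := ne_of_gt ht.1
  have hA : (z.1 - a.1) * (z.2 - a.2) = (s * (b.1 - a.1)) * (t * (c.2 - a.2)) := by
    rw [← e1, ← e4]
  have hB : (z.2 - a.2) * (z.1 - a.1) = (s * (b.2 - a.2)) * (t * (c.1 - a.1)) := by
    rw [← e2, ← e3]
  have : s * ((b.1 - a.1) * (c.2 - a.2) - (b.2 - a.2) * (c.1 - a.1)) * t = 0 := by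
    linear_combination hB - hA
  rcases mul_eq_zero.mp this with h'|h'
  · rcases mul_eq_zero.mp h' with h''|h''
    · exact absurd h'' hs0
    · exact h''
  · exact absurd h' ht0

lemma key_core {A B UU WW ZZ a b C : ℝ} (hC : UU * WW - B ^ 2 = C ^ 2) (hCne : C ≠ 0)
    (hA : A = a * UU + b * B) (hZZ : ZZ = a ^ 2 * UU + 2 * a * b * B + b ^ 2 * WW)
    (hUU : 0 < UU) (hWW : 0 < WW) (hZZpos : 0 < ZZ) (ha : 0 < a) (hb : 0 < b) :
    B / Real.sqrt WW < A / Real.sqrt ZZ := by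
  have hCpos : 0 < UU * WW - B ^ 2 := by
    rw [hC]; exact (sq_nonneg C).lt_of_ne (Ne.symm (pow_ne_zero 2 hCne))
  have hsW : 0 < Real.sqrt WW := Real.sqrt_pos.mpr hWW
  have hsZ : 0 < Real.sqrt ZZ := Real.sqrt_pos.mpr hZZpos
  have hsW2 : Real.sqrt WW ^ 2 = WW := Real.sq_sqrt hWW.le
  have hsZ2 : Real.sqrt ZZ ^ 2 = ZZ := Real.sq_sqrt hZZpos.le
  rw [div_lt_div_iff₀ hsW hsZ]
  rcases lt_or_ge 0 B with hBpos | hBnonpos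
  · have hApos : 0 < A := by rw [hA]; positivity
    have hsum : 0 < a * UU + 2 * b * B := by positivity
    have hkey : B ^ 2 * ZZ < A ^ 2 * WW := by
      have hid : A ^ 2 * WW - B ^ 2 * ZZ = a * (UU * WW - B ^ 2) * (a * UU + 2 * b * B) := by
        rw [hA, hZZ]; ring
      nlinarith [mul_pos (mul_pos ha hCpos) hsum]
    have h1 : (B * Real.sqrt ZZ) ^ 2 < (A * Real.sqrt WW) ^ 2 := by
      rw [mul_pow, mul_pow, hsW2, hsZ2]; exact hkey
    exact lt_of_pow_lt_pow_left₀ 2 (by positivity) h1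
  · rcases lt_or_ge 0 A with hApos | hAnonpos
    · have hle : B * Real.sqrt ZZ ≤ 0 := mul_nonpos_of_nonpos_of_nonneg hBnonpos hsZ.le
      have h2 : 0 < A * Real.sqrt WW := mul_pos hApos hsW
      linarith
    · have hBneg : B < 0 := by
        rcases lt_or_eq_of_le hBnonpos with h | h
        · exact h
        · exfalso; rw [hA, ← h] at hAnonpos; nlinarith
      have hsum : a * UU + 2 * b * B < 0 := by
        have h3 : a * UU + 2 * b * B = A + b * B := by rw [hA]; ring
        nlinarith [mul_pos hb (neg_pos.mpr hBneg)]
      have hkey : A ^ 2 * WW < B ^ 2 * ZZ := by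
        have hid : B ^ 2 * ZZ - A ^ 2 * WW = a * (UU * WW - B ^ 2) * (-(a * UU + 2 * b * B)) := by
          rw [hA, hZZ]; ring
        nlinarith [mul_pos (mul_pos ha hCpos) (neg_pos.mpr hsum)]
      have h1 : ((-A) * Real.sqrt WW) ^ 2 < ((-B) * Real.sqrt ZZ) ^ 2 := by
        rw [mul_pow, mul_pow, hsW2, hsZ2, neg_pow, neg_pow]
        simpa using hkey
      have h2 : (-A) * Real.sqrt WW < (-B) * Real.sqrt ZZ :=
        lt_of_pow_lt_pow_left₀ 2 (mul_nonneg (neg_nonneg.mpr hBnonpos) hsZ.le) h1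
      linarith

lemma key_ineq {u1 u2 w1 w2 a b : ℝ} (hind : u1 * w2 - u2 * w1 ≠ 0)
    (ha : 0 < a) (hb : 0 < b) :
    (u1 * w1 + u2 * w2) / Real.sqrt (w1 ^ 2 + w2 ^ 2) <
      (u1 * (a * u1 + b * w1) + u2 * (a * u2 + b * w2)) /
        Real.sqrt ((a * u1 + b * w1) ^ 2 + (a * u2 + b * w2) ^ 2) := by
  have hWW : 0 < w1 ^ 2 + w2 ^ 2 := by
    rcases eq_or_ne w1 0 with h1 | h1
    · have h2 : w2 ≠ 0 := by intro h2; apply hind; rw [h1, h2]; ring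
      have t2 : 0 < w2 ^ 2 := (sq_nonneg _).lt_of_ne (Ne.symm (pow_ne_zero 2 h2))
      nlinarith [sq_nonneg w1]
    · have t2 : 0 < w1 ^ 2 := (sq_nonneg _).lt_of_ne (Ne.symm (pow_ne_zero 2 h1))
      nlinarith [sq_nonneg w2]
  have hUU : 0 < u1 ^ 2 + u2 ^ 2 := by
    rcases eq_or_ne u1 0 with h1 | h1
    · have h2 : u2 ≠ 0 := by intro h2; apply hind; rw [h1, h2]; ring
      have t2 : 0 < u2 ^ 2 := (sq_nonneg _).lt_of_ne (Ne.symm (pow_ne_zero 2 h2))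
      nlinarith [sq_nonneg u1]
    · have t2 : 0 < u1 ^ 2 := (sq_nonneg _).lt_of_ne (Ne.symm (pow_ne_zero 2 h1))
      nlinarith [sq_nonneg u2]
  have hZne : ¬(a * u1 + b * w1 = 0 ∧ a * u2 + b * w2 = 0) := by
    rintro ⟨h1, h2⟩
    apply hind
    have h3 : a * (u1 * w2 - u2 * w1) = 0 := by linear_combination w2 * h1 - w1 * h2
    rcases mul_eq_zero.mp h3 with h' | h'
    · exact absurd h' (ne_of_gt ha)
    · exact h'
  have hZZ : 0 < (a * u1 + b * w1) ^ 2 + (a * u2 + b * w2) ^ 2 := by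
    rcases eq_or_ne (a * u1 + b * w1) 0 with h1 | h1
    · have h2 : a * u2 + b * w2 ≠ 0 := fun h2 => hZne ⟨h1, h2⟩
      have t2 : 0 < (a * u2 + b * w2) ^ 2 := (sq_nonneg _).lt_of_ne (Ne.symm (pow_ne_zero 2 h2))
      have t1 : (0:ℝ) ≤ (a * u1 + b * w1) ^ 2 := sq_nonneg _
      linarith
    · have t2 : 0 < (a * u1 + b * w1) ^ 2 := (sq_nonneg _).lt_of_ne (Ne.symm (pow_ne_zero 2 h1))
      have t1 : (0:ℝ) ≤ (a * u2 + b * w2) ^ 2 := sq_nonneg _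
      linarith
  exact key_core (C := u1 * w2 - u2 * w1) (by ring) hind (by ring) (by ring) hUU hWW hZZ ha hb

lemma cross_step {P Q X Y : ℝ × ℝ}
    (hncol : (P.1 - Q.1) * (X.2 - Q.2) - (P.2 - Q.2) * (X.1 - Q.1) ≠ 0)
    {z : ℝ × ℝ} (hz1 : z ∈ openSegment ℝ P X) (hz2 : z ∈ openSegment ℝ Q Y) :
    ((P.1 - Q.1) * (X.1 - Q.1) + (P.2 - Q.2) * (X.2 - Q.2)) /
        Real.sqrt ((X.1 - Q.1) ^ 2 + (X.2 - Q.2) ^ 2) <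
      ((P.1 - Q.1) * (Y.1 - Q.1) + (P.2 - Q.2) * (Y.2 - Q.2)) /
        Real.sqrt ((Y.1 - Q.1) ^ 2 + (Y.2 - Q.2) ^ 2) := by
  obtain ⟨a, b, ha, hb, hab, hz⟩ := hz1
  obtain ⟨c, d, hc, hd, hcd, hz'⟩ := hz2
  have h1f : a * P.1 + b * X.1 = z.1 := by
    have := congrArg Prod.fst hz; simpa using this
  have h1s : a * P.2 + b * X.2 = z.2 := by
    have := congrArg Prod.snd hz; simpa using this
  have h2f : c * Q.1 + d * Y.1 = z.1 := by
    have := congrArg Prod.fst hz'; simpa using this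
  have h2s : c * Q.2 + d * Y.2 = z.2 := by
    have := congrArg Prod.snd hz'; simpa using this
  have e1 : d * (Y.1 - Q.1) = a * (P.1 - Q.1) + b * (X.1 - Q.1) := by
    linear_combination h2f - h1f + Q.1 * hab - Q.1 * hcd
  have e2 : d * (Y.2 - Q.2) = a * (P.2 - Q.2) + b * (X.2 - Q.2) := by
    linear_combination h2s - h1s + Q.2 * hab - Q.2 * hcd
  have hkey := key_ineq (u1 := P.1 - Q.1) (u2 := P.2 - Q.2) (w1 := X.1 - Q.1)
    (w2 := X.2 - Q.2) hncol ha hb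
  refine lt_of_lt_of_eq hkey ?_
  have hZZeq : (a * (P.1 - Q.1) + b * (X.1 - Q.1)) ^ 2 + (a * (P.2 - Q.2) + b * (X.2 - Q.2)) ^ 2
      = d ^ 2 * ((Y.1 - Q.1) ^ 2 + (Y.2 - Q.2) ^ 2) := by
    rw [← e1, ← e2]; ring
  have hnum : (P.1 - Q.1) * (a * (P.1 - Q.1) + b * (X.1 - Q.1)) +
      (P.2 - Q.2) * (a * (P.2 - Q.2) + b * (X.2 - Q.2))
      = d * ((P.1 - Q.1) * (Y.1 - Q.1) + (P.2 - Q.2) * (Y.2 - Q.2)) := by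
    rw [← e1, ← e2]; ring
  have hsq : Real.sqrt ((a * (P.1 - Q.1) + b * (X.1 - Q.1)) ^ 2 +
      (a * (P.2 - Q.2) + b * (X.2 - Q.2)) ^ 2)
      = d * Real.sqrt ((Y.1 - Q.1) ^ 2 + (Y.2 - Q.2) ^ 2) := by
    rw [hZZeq, Real.sqrt_mul (sq_nonneg d), Real.sqrt_sq hd.le]
  rw [hnum, hsq, mul_div_mul_left _ _ (ne_of_gt hd)]

def Cross (a b c d : ℝ × ℝ) : Prop :=
  (openSegment ℝ a b ∩ openSegment ℝ c d).Nonempty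

def GenPos (P : Finset (ℝ × ℝ)) : Prop :=
  ∀ a ∈ P, ∀ b ∈ P, ∀ c ∈ P, a ≠ b → a ≠ c → b ≠ c →
    ¬ Collinear ℝ ({a, b, c} : Set (ℝ × ℝ))

def NonCrossing {P : Finset (ℝ × ℝ)} (T : SimpleGraph P) : Prop :=
  ∀ a b c d : P, T.Adj a b → T.Adj c d → s(a, b) ≠ s(c, d) →
    ¬ Cross (a : ℝ × ℝ) b c d

/-- A `pq`-brush: a spanning tree containing the edge `{p,q}`, in which every edge is
incident to `p` or `q`, and both `p` and `q` have degree at least 2. -/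
def IsBrush {P : Finset (ℝ × ℝ)} (T : SimpleGraph P) (p q : P) : Prop :=
  T.Adj p q ∧ 2 ≤ (T.neighborSet p).ncard ∧ 2 ≤ (T.neighborSet q).ncard ∧
    ∀ a b : P, T.Adj a b → a = p ∨ a = q ∨ b = p ∨ b = q

/-- The spanning star of `P` with center `p`. -/
def starGraph (P : Finset (ℝ × ℝ)) (p : P) : SimpleGraph P :=
  SimpleGraph.fromRel (fun a _ => a = p)

theorem stmt_15 (P : Finset (ℝ × ℝ)) (hgen : GenPos P) (k ℓ : ℕ)
    (hkl : k + ℓ = P.card - 2) (hl : 1 ≤ ℓ)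
    (p q : P) (hpq : p ≠ q)
    (T : SimpleGraph P) (hT : T.IsTree) (hnc : NonCrossing T)
    (hbrush : IsBrush T p q)
    (hdp : (T.neighborSet p).ncard = k + 1) (hdq : (T.neighborSet q).ncard = ℓ + 1) :
    ∃ T' : SimpleGraph P, T'.IsTree ∧ NonCrossing T' ∧
      (symmDiff T.edgeSet T'.edgeSet).ncard = 2 ∧
      ((IsBrush T' p q ∧ (T'.neighborSet p).ncard = k + 2 ∧
          (T'.neighborSet q).ncard = ℓ) ∨
        (ℓ = 1 ∧ T' = starGraph P p)) := by
  classical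
  obtain ⟨hadj, hdp2, hdq2, hinc⟩ := hbrush
  -- no triangle p-y-q
  have hbr := SimpleGraph.isAcyclic_iff_forall_adj_isBridge.mp hT.IsAcyclic
  have hnoTri : ∀ y : P, y ≠ p → y ≠ q → T.Adj p y → ¬T.Adj q y := by
    intro y hyp hyq h1 h2
    have hb := hbr hadj
    rw [SimpleGraph.isBridge_iff] at hb
    apply hb
    refine ⟨SimpleGraph.Walk.cons (v := y) ?_ (SimpleGraph.Walk.cons ?_ SimpleGraph.Walk.nil)⟩
    · rw [SimpleGraph.deleteEdges_adj]
      refine ⟨h1, ?_⟩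
      intro hmem
      simp only [Set.mem_singleton_iff, Sym2.eq_iff] at hmem
      rcases hmem with ⟨-, h⟩ | ⟨h, -⟩
      · exact hyq h
      · exact hpq h
    · rw [SimpleGraph.deleteEdges_adj]
      refine ⟨h2.symm, ?_⟩
      intro hmem
      simp only [Set.mem_singleton_iff, Sym2.eq_iff] at hmem
      rcases hmem with ⟨h, -⟩ | ⟨h, -⟩
      · exact hyp h
      · exact hyq h
  -- coordinate distinctness and general position helpers
  have cne : ∀ a b : P, a ≠ b → (a : ℝ × ℝ) ≠ (b : ℝ × ℝ) := by
    intro a b h hc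
    exact h (Subtype.ext hc)
  have hg3 : ∀ a b c : P, a ≠ b → a ≠ c → b ≠ c →
      ¬Collinear ℝ ({(a : ℝ × ℝ), (b : ℝ × ℝ), (c : ℝ × ℝ)} : Set (ℝ × ℝ)) :=
    fun a b c h1 h2 h3 => hgen a a.2 b b.2 c c.2 (cne _ _ h1) (cne _ _ h2) (cne _ _ h3)
  -- choose the leaf x of q with maximal f
  have hqfin : (T.neighborSet q).Finite := Set.toFinite _
  have hpmem : p ∈ T.neighborSet q := hadj.symm
  have hSfin : (T.neighborSet q \ {p}).Finite := hqfin.diff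
  have hScard : (T.neighborSet q \ {p}).ncard = ℓ := by
    rw [Set.ncard_diff_singleton_of_mem hpmem, hdq]; omega
  have hSne : (T.neighborSet q \ {p}).Nonempty :=
    Set.nonempty_of_ncard_ne_zero (by rw [hScard]; omega)
  set f : P → ℝ := fun y =>
    (((p : ℝ × ℝ).1 - (q : ℝ × ℝ).1) * ((y : ℝ × ℝ).1 - (q : ℝ × ℝ).1) +
      ((p : ℝ × ℝ).2 - (q : ℝ × ℝ).2) * ((y : ℝ × ℝ).2 - (q : ℝ × ℝ).2)) /
      Real.sqrt (((y : ℝ × ℝ).1 - (q : ℝ × ℝ).1) ^ 2 + ((y : ℝ × ℝ).2 - (q : ℝ × ℝ).2) ^ 2)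
    with hf
  obtain ⟨x, hxS', hxmax'⟩ := hSfin.toFinset.exists_max_image f
    (by rwa [Set.Finite.toFinset_nonempty])
  rw [Set.Finite.mem_toFinset] at hxS'
  have hmax : ∀ y : P, y ∈ T.neighborSet q \ {p} → f y ≤ f x := by
    intro y hy
    exact hxmax' y (by rwa [Set.Finite.mem_toFinset])
  have hxq : T.Adj q x := hxS'.1
  have hxp : x ≠ p := by
    intro h; exact hxS'.2 (by simp [h])
  have hxqne : x ≠ q := hxq.ne'
  have hpx_ne : p ≠ x := hxp.symm
  have hnpx : ¬T.Adj p x := fun h => hnoTri x hxp hxqne h hxq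
  -- the new graph
  set T' : SimpleGraph P :=
    SimpleGraph.fromEdgeSet (insert s(p, x) (T.edgeSet \ {s(q, x)})) with hT'
  have hT'adj : ∀ a b : P, T'.Adj a b ↔
      (s(a, b) = s(p, x) ∨ (T.Adj a b ∧ s(a, b) ≠ s(q, x))) := by
    intro a b
    rw [hT', SimpleGraph.fromEdgeSet_adj]
    constructor
    · rintro ⟨hm, hne⟩
      rcases Set.mem_insert_iff.mp hm with h | ⟨hmE, hns⟩
      · exact Or.inl h
      · exact Or.inr ⟨(SimpleGraph.mem_edgeSet T).mp hmE, by simpa using hns⟩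
    · rintro (h | ⟨hA, hne⟩)
      · refine ⟨Set.mem_insert_iff.mpr (Or.inl h), ?_⟩
        intro hab
        rw [hab] at h
        rw [Sym2.eq_iff] at h
        rcases h with ⟨h1, h2⟩ | ⟨h1, h2⟩
        · exact hpx_ne (h1 ▸ h2 ▸ rfl)
        · exact hpx_ne (h2 ▸ h1 ▸ rfl)
      · exact ⟨Set.mem_insert_iff.mpr (Or.inr ⟨(SimpleGraph.mem_edgeSet T).mpr hA, by simpa using hne⟩),
          hA.ne⟩
  -- basic sym2 disequalities
  have hs_pq_ne : s(p, x) ≠ s(q, x) := by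
    rw [ne_eq, Sym2.eq_iff]
    rintro (⟨h1, -⟩ | ⟨h1, h2⟩)
    · exact hpq h1
    · exact hpq (h1.trans h2)
  have hT'pq : T'.Adj p q := by
    rw [hT'adj]
    right
    refine ⟨hadj, ?_⟩
    rw [ne_eq, Sym2.eq_iff]
    rintro (⟨h1, -⟩ | ⟨h1, -⟩)
    · exact hpq h1
    · exact hpx_ne h1
  have hT'px : T'.Adj p x := by rw [hT'adj]; exact Or.inl rfl
  -- neighbor sets
  have hNp : T'.neighborSet p = insert x (T.neighborSet p) := by
    ext y
    simp only [SimpleGraph.mem_neighborSet, Set.mem_insert_iff]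
    rw [hT'adj]
    constructor
    · rintro (h | ⟨hA, -⟩)
      · rw [Sym2.eq_iff] at h
        rcases h with ⟨-, h2⟩ | ⟨h1, -⟩
        · exact Or.inl h2
        · exact absurd h1 hpx_ne
      · exact Or.inr hA
    · rintro (rfl | hA)
      · exact Or.inl rfl
      · refine Or.inr ⟨hA, ?_⟩
        rw [ne_eq, Sym2.eq_iff]
        rintro (⟨h1, -⟩ | ⟨h1, -⟩)
        · exact hpq h1
        · exact hpx_ne h1
  have hNq : T'.neighborSet q = T.neighborSet q \ {x} := by
    ext y
    simp only [SimpleGraph.mem_neighborSet, Set.mem_diff, Set.mem_singleton_iff]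
    rw [hT'adj]
    constructor
    · rintro (h | ⟨hA, hne⟩)
      · rw [Sym2.eq_iff] at h
        rcases h with ⟨h1, -⟩ | ⟨h1, -⟩
        · exact absurd h1.symm hpq
        · exact absurd h1.symm hxqne
      · refine ⟨hA, ?_⟩
        intro rfl'
        exact hne (by rw [rfl'])
    · rintro ⟨hA, hne⟩
      refine Or.inr ⟨hA, ?_⟩
      rw [ne_eq, Sym2.eq_iff]
      rintro (⟨-, h2⟩ | ⟨h1, -⟩)
      · exact hne h2
      · exact hxqne h1.symm
  have hxnotinNp : x ∉ T.neighborSet p := hnpx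
  have hdp' : (T'.neighborSet p).ncard = k + 2 := by
    rw [hNp, Set.ncard_insert_of_notMem hxnotinNp (Set.toFinite _), hdp]
  have hdq' : (T'.neighborSet q).ncard = ℓ := by
    rw [hNq, Set.ncard_diff_singleton_of_mem (show x ∈ T.neighborSet q from hxq), hdq]; omega
  -- edge sets
  have hqx_in : s(q, x) ∈ T.edgeSet := (SimpleGraph.mem_edgeSet T).mpr hxq
  have hpx_notin : s(p, x) ∉ T.edgeSet := fun h => hnpx ((SimpleGraph.mem_edgeSet T).mp h)
  have hE' : T'.edgeSet = insert s(p, x) (T.edgeSet \ {s(q, x)}) := by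
    rw [hT', SimpleGraph.edgeSet_fromEdgeSet]
    rw [sdiff_eq_left]
    rw [Set.disjoint_left]
    rintro e (rfl | ⟨he, -⟩) hd
    · exact hpx_ne (Sym2.mk_isDiag_iff.mp hd)
    · exact (SimpleGraph.not_isDiag_of_mem_edgeSet T he) hd
  have hsymm : symmDiff T.edgeSet T'.edgeSet = {s(q, x), s(p, x)} := by
    rw [hE', Set.symmDiff_def]
    ext e
    simp only [Set.mem_union, Set.mem_diff, Set.mem_insert_iff, Set.mem_singleton_iff]
    constructor
    · rintro (⟨he, hne⟩ | ⟨h1, h2⟩)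
      · push_neg at hne
        exact Or.inl (hne.2 he)
      · rcases h1 with rfl | ⟨he, -⟩
        · exact Or.inr rfl
        · exact absurd he h2
    · rintro (rfl | rfl)
      · refine Or.inl ⟨hqx_in, ?_⟩
        rintro (h | ⟨-, h⟩)
        · exact hs_pq_ne h.symm
        · exact h rfl
      · exact Or.inr ⟨Or.inl rfl, hpx_notin⟩
  have hsymmcard : (symmDiff T.edgeSet T'.edgeSet).ncard = 2 := by
    rw [hsymm, Set.ncard_pair (Ne.symm hs_pq_ne)]
  -- x is a leaf of q in T
  have hleaf : ∀ b : P, T.Adj x b → b = q := by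
    intro b hb
    rcases hinc x b hb with h | h | h | h
    · exact absurd h hxp
    · exact absurd h hxqne
    · exact absurd hb.symm (h ▸ hnpx)
    · exact h
  -- every vertex other than p has an edge
  have hstep : ∀ v : P, v ≠ p → ∃ b, T.Adj v b := by
    intro v hv
    obtain ⟨wk⟩ := hT.isConnected.preconnected v p
    cases wk with
    | nil => exact absurd rfl hv
    | cons h _ => exact ⟨_, h⟩
  -- connectivity of T'
  have hreach : ∀ v : P, T'.Reachable v p := by
    intro v
    by_cases hvp : v = p
    · exact hvp ▸ SimpleGraph.Reachable.refl _
    by_cases hvx : v = x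
    · subst hvx
      exact hT'px.symm.reachable
    by_cases hvq : v = q
    · subst hvq
      exact hT'pq.symm.reachable
    obtain ⟨b, hb⟩ := hstep v hvp
    rcases hinc v b hb with h | h | h | h
    · exact absurd h hvp
    · exact absurd h hvq
    · subst h
      refine SimpleGraph.Adj.reachable ?_
      rw [hT'adj]
      refine Or.inr ⟨hb, ?_⟩
      rw [ne_eq, Sym2.eq_iff]
      rintro (⟨h1, -⟩ | ⟨h1, h2⟩)
      · exact hvq h1
      · exact hvx h1
    · rw [h] at hb
      have hvq' : T'.Adj v q := by
        rw [hT'adj]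
        refine Or.inr ⟨hb, ?_⟩
        rw [ne_eq, Sym2.eq_iff]
        rintro (⟨h1, -⟩ | ⟨h1, -⟩)
        · exact hvq h1
        · exact hvx h1
      exact hvq'.reachable.trans hT'pq.symm.reachable
  have hT'conn : T'.Connected := by
    rw [SimpleGraph.connected_iff]
    exact ⟨fun u v => (hreach u).trans (hreach v).symm, ⟨p⟩⟩
  -- acyclicity of T'
  have hT'acyc : T'.IsAcyclic := by
    intro v c hc
    by_cases he : s(p, x) ∈ c.edges
    · have hbridge : T'.IsBridge s(p, x) := by
        rw [SimpleGraph.isBridge_iff]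
        rintro ⟨wk⟩
        have wk' := wk.reverse
        cases wk' with
        | nil => exact hpx_ne rfl
        | cons h w =>
          rw [SimpleGraph.deleteEdges_adj] at h
          rcases (hT'adj _ _).mp h.1 with hnew | ⟨hold, hne⟩
          · apply h.2
            simpa using hnew
          · have hbq := hleaf _ hold
            apply hne
            rw [hbq]
            exact Sym2.eq_swap
      exact ((SimpleGraph.isBridge_iff_mem_and_forall_cycle_notMem (c.edges_subset_edgeSet he)).mp hbridge) c hc he
    · have htrans : ∀ e ∈ c.edges, e ∈ T.edgeSet := by
        intro e hee
        have hmm := c.edges_subset_edgeSet hee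
        rw [hE'] at hmm
        rcases hmm with rfl | ⟨hmE, -⟩
        · exact absurd hee he
        · exact hmE
      exact hT.IsAcyclic (c.transfer T htrans) (hc.transfer htrans)
  have hT'tree : T'.IsTree := ⟨hT'conn, hT'acyc⟩
  -- determinant nonzero for (q; p, x)
  have hdet : ((p : ℝ × ℝ).1 - (q : ℝ × ℝ).1) * ((x : ℝ × ℝ).2 - (q : ℝ × ℝ).2) -
      ((p : ℝ × ℝ).2 - (q : ℝ × ℝ).2) * ((x : ℝ × ℝ).1 - (q : ℝ × ℝ).1) ≠ 0 := by
    intro h0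
    exact hg3 q p x (Ne.symm hpq) (Ne.symm hxqne) hpx_ne (collinear_det.mpr h0)
  -- new edge doesn't cross edges at q
  have hcoreQ : ∀ d : P, T.Adj q d → d ≠ p → d ≠ x →
      ¬(openSegment ℝ (p : ℝ × ℝ) (x : ℝ × ℝ) ∩ openSegment ℝ (q : ℝ × ℝ) (d : ℝ × ℝ)).Nonempty := by
    rintro d hd hdp hdx ⟨z, hz1, hz2⟩
    have hlt := cross_step hdet hz1 hz2
    have hle : f d ≤ f x := hmax d ⟨hd, by simp [hdp]⟩
    exact absurd hlt (not_lt.mpr hle)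
  -- new edge doesn't cross edges at p
  have hcoreP : ∀ d : P, p ≠ d → x ≠ d →
      ¬(openSegment ℝ (p : ℝ × ℝ) (x : ℝ × ℝ) ∩ openSegment ℝ (p : ℝ × ℝ) (d : ℝ × ℝ)).Nonempty := by
    intro d hpd hxd hne
    exact hg3 p x d hpx_ne hpd hxd (shared_endpoint hne)
  -- master core lemma
  have hcore : ∀ c d : P, T.Adj c d → s(c, d) ≠ s(q, x) → s(c, d) ≠ s(p, x) →
      ¬(openSegment ℝ (p : ℝ × ℝ) (x : ℝ × ℝ) ∩ openSegment ℝ (c : ℝ × ℝ) (d : ℝ × ℝ)).Nonempty := by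
    have hL : ∀ c d : P, T.Adj c d → s(c, d) ≠ s(q, x) → s(c, d) ≠ s(p, x) → (c = p ∨ c = q) →
        ¬(openSegment ℝ (p : ℝ × ℝ) (x : ℝ × ℝ) ∩
            openSegment ℝ (c : ℝ × ℝ) (d : ℝ × ℝ)).Nonempty := by
      intro c d hcd hne1 hne2 hcase hne
      rcases hcase with hc | hc
      all_goals rw [hc] at hcd hne1 hne2 hne
      · have hxd : x ≠ d := fun h => hne2 (by rw [← h])
        exact hcoreP d hcd.ne hxd hne
      · by_cases hdp : d = p
        · rw [hdp, openSegment_symm ℝ (q : ℝ × ℝ) (p : ℝ × ℝ)] at hne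
          exact hg3 p x q hpx_ne hpq hxqne (shared_endpoint hne)
        · have hdx : d ≠ x := fun h => hne1 (by rw [h])
          exact hcoreQ d hcd hdp hdx hne
    intro c d hcd hne1 hne2 hne
    rcases hinc c d hcd with h | h | h | h
    · exact hL c d hcd hne1 hne2 (Or.inl h) hne
    · exact hL c d hcd hne1 hne2 (Or.inr h) hne
    · refine hL d c hcd.symm (by rw [Sym2.eq_swap]; exact hne1)
        (by rw [Sym2.eq_swap]; exact hne2) (Or.inl h) ?_
      rwa [openSegment_symm ℝ (c : ℝ × ℝ) (d : ℝ × ℝ)] at hne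
    · refine hL d c hcd.symm (by rw [Sym2.eq_swap]; exact hne1)
        (by rw [Sym2.eq_swap]; exact hne2) (Or.inr h) ?_
      rwa [openSegment_symm ℝ (c : ℝ × ℝ) (d : ℝ × ℝ)] at hne
  -- noncrossing of T'
  have hnc' : NonCrossing T' := by
    intro a b c d hab hcd hne hcross
    rcases (hT'adj a b).mp hab with hab' | ⟨habT, habne⟩
    · rcases (hT'adj c d).mp hcd with hcd' | ⟨hcdT, hcdne⟩
      · exact hne (hab'.trans hcd'.symm)
      · have hcd_ne_px : s(c, d) ≠ s(p, x) := fun h => hne (hab'.trans h.symm)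
        rw [Sym2.eq_iff] at hab'
        rcases hab' with ⟨rfl, rfl⟩ | ⟨rfl, rfl⟩
        · exact hcore c d hcdT hcdne hcd_ne_px hcross
        · apply hcore c d hcdT hcdne hcd_ne_px
          have hcross' : (openSegment ℝ (a : ℝ × ℝ) (b : ℝ × ℝ) ∩
              openSegment ℝ (c : ℝ × ℝ) (d : ℝ × ℝ)).Nonempty := hcross
          rwa [openSegment_symm ℝ (a : ℝ × ℝ) (b : ℝ × ℝ)] at hcross'
    · rcases (hT'adj c d).mp hcd with hcd' | ⟨hcdT, hcdne⟩
      · have hab_ne_px : s(a, b) ≠ s(p, x) := fun h => hne (h.trans hcd'.symm)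
        have hcross' : (openSegment ℝ (c : ℝ × ℝ) (d : ℝ × ℝ) ∩
            openSegment ℝ (a : ℝ × ℝ) (b : ℝ × ℝ)).Nonempty := by
          obtain ⟨z, h1, h2⟩ := hcross
          exact ⟨z, h2, h1⟩
        rw [Sym2.eq_iff] at hcd'
        rcases hcd' with ⟨rfl, rfl⟩ | ⟨rfl, rfl⟩
        · exact hcore a b habT habne hab_ne_px hcross'
        · apply hcore a b habT habne hab_ne_px
          rwa [openSegment_symm ℝ (c : ℝ × ℝ) (d : ℝ × ℝ)] at hcross'
      · exact hnc a b c d habT hcdT hne hcross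
  refine ⟨T', hT'tree, hnc', hsymmcard, ?_⟩
  rcases eq_or_lt_of_le hl with hl1 | hl2
  · -- ℓ = 1 : star
    right
    refine ⟨hl1.symm, ?_⟩
    have hNq2 : T.neighborSet q = ({p, x} : Set P) := by
      refine (Set.eq_of_subset_of_ncard_le ?_ ?_ hqfin).symm
      · rintro y (rfl | rfl)
        · exact hpmem
        · exact hxq
      · rw [hdq, Set.ncard_pair hpx_ne]
        omega
    have hstar : ∀ b : P, b ≠ p → T'.Adj p b := by
      intro b hbp
      by_cases hbx : b = x
      · subst hbx; exact hT'px
      by_cases hbq : b = q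
      · subst hbq; exact hT'pq
      obtain ⟨w, hw⟩ := hstep b hbp
      rcases hinc b w hw with h | h | h | h
      · exact absurd h hbp
      · exact absurd h hbq
      · rw [hT'adj]
        refine Or.inr ⟨(h ▸ hw).symm, ?_⟩
        rw [ne_eq, Sym2.eq_iff]
        rintro (⟨h1, -⟩ | ⟨h1, -⟩)
        · exact hpq h1
        · exact hpx_ne h1
      · exfalso
        have hmem : b ∈ ({p, x} : Set P) := by
          rw [← hNq2]
          exact (h ▸ hw).symm
        rcases hmem with rfl | rfl
        · exact hbp rfl
        · exact hbx rfl
    ext a b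
    simp only [starGraph, SimpleGraph.fromRel_adj]
    constructor
    · intro h
      refine ⟨h.ne, ?_⟩
      rcases (hT'adj a b).mp h with hnew | ⟨hold, hnee⟩
      · rw [Sym2.eq_iff] at hnew
        rcases hnew with ⟨rfl, -⟩ | ⟨-, rfl⟩
        · exact Or.inl rfl
        · exact Or.inr rfl
      · rcases hinc a b hold with h1 | h1 | h1 | h1
        · exact Or.inl h1
        · subst h1
          have hmem : b ∈ ({p, x} : Set P) := by rw [← hNq2]; exact hold
          rcases hmem with rfl | rfl
          · exact Or.inr rfl
          · exact absurd rfl hnee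
        · exact Or.inr h1
        · subst h1
          have hmem : a ∈ ({p, x} : Set P) := by rw [← hNq2]; exact hold.symm
          rcases hmem with rfl | rfl
          · exact Or.inl rfl
          · exact absurd Sym2.eq_swap hnee
    · rintro ⟨hne', (rfl | rfl)⟩
      · exact hstar b (Ne.symm hne')
      · exact (hstar a hne').symm
  · -- ℓ ≥ 2 : brush
    left
    refine ⟨⟨hT'pq, ?_, ?_, ?_⟩, hdp', hdq'⟩
    · rw [hdp']; omega
    · rw [hdq']; omega
    · intro a b hab
      rcases (hT'adj a b).mp hab with hnew | ⟨hold, -⟩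
      · rw [Sym2.eq_iff] at hnew
        rcases hnew with ⟨rfl, -⟩ | ⟨-, rfl⟩
        · exact Or.inl rfl
        · exact Or.inr (Or.inr (Or.inl rfl))
      · exact hinc a b hold
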